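/- There exist matrices A, S, B ∈ M_3(ℂ) with A upper triangular, Tr(A) a nonnegative real number, S Hermitian diagonal with real entries satisfying Re(A) ≤ S, and B strictly upper triangular with ‖B‖ ≤ 1, such that for every real r with √2 − 1 < r < 1 one has Tr(A) + ∑_{m=1}^∞ |Tr(A B*)| r^m > Tr(S). (Explicit witnesses: A with rows (2, −2√2, −2), (0, 2, −2√2), (0, 0, 2); S = diag(3, 4, 3); B with a single 1 in positions (1,2) and (2,3); then |Tr(A B*)| = 4√2, Tr(A) = 6, Tr(S) = 10.) -/

import Mathlib

open Matrix
open scoped Matrix.Norms.L2Operator ComplexOrder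

noncomputable section BohrAux

private def bohrA : Matrix (Fin 3) (Fin 3) ℂ :=
  !![2, -2*(Real.sqrt 2 : ℂ), -2; 0, 2, -2*(Real.sqrt 2 : ℂ); 0, 0, 2]

private def bohrS : Matrix (Fin 3) (Fin 3) ℂ := !![3,0,0;0,4,0;0,0,3]

private def bohrB : Matrix (Fin 3) (Fin 3) ℂ := !![0,1,0;0,0,1;0,0,0]

private def bohrC : Matrix (Fin 3) (Fin 3) ℂ :=
  !![1,(Real.sqrt 2 : ℂ),1;0,0,0;0,0,0]

private lemma bohr_s_sq : (Real.sqrt 2 : ℂ) * (Real.sqrt 2 : ℂ) = 2 := by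
  norm_cast
  rw [Real.mul_self_sqrt (by norm_num)]

private lemma bohr_trace_A : bohrA.trace = 6 := by
  simp [bohrA, Matrix.trace_fin_three, Matrix.vecHead, Matrix.vecTail]
  norm_num

private lemma bohr_trace_S : bohrS.trace = 10 := by
  simp [bohrS, Matrix.trace_fin_three, Matrix.vecHead, Matrix.vecTail]
  norm_num

set_option maxHeartbeats 1000000 in
private lemma bohr_trace_AB : (bohrA * bohrBᴴ).trace = -(4 * (Real.sqrt 2 : ℂ)) := by
  simp [bohrA, bohrB, Matrix.trace_fin_three, Matrix.mul_apply, Matrix.vecMul,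
    dotProduct, Fin.sum_univ_three, Matrix.conjTranspose_apply,
    Matrix.vecHead, Matrix.vecTail]
  ring

end BohrAux

set_option maxHeartbeats 1000000 in
/-- `√2 - 1` is optimal in Bohr's inequality for 3×3 upper triangular matrices. -/
theorem bohr_matrix_optimality_three_by_three :
    ∃ A S B : Matrix (Fin 3) (Fin 3) ℂ,
      (∀ i j : Fin 3, j < i → A i j = 0) ∧
      0 ≤ A.trace ∧
      S.IsHermitian ∧
      (∀ i j : Fin 3, i ≠ j → S i j = 0) ∧
      (∀ i : Fin 3, (S i i).im = 0) ∧
      (S - (2 : ℂ)⁻¹ • (A + Aᴴ)).PosSemidef ∧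
      (∀ i j : Fin 3, j ≤ i → B i j = 0) ∧
      ‖B‖ ≤ 1 ∧
      ∀ r : ℝ, Real.sqrt 2 - 1 < r → r < 1 →
        A.trace.re + ∑' m : ℕ, ‖(A * Bᴴ).trace‖ * r ^ (m + 1) >
          S.trace.re := by
  have hs0 : (0:ℝ) ≤ Real.sqrt 2 := Real.sqrt_nonneg 2
  have hs2 : Real.sqrt 2 * Real.sqrt 2 = 2 := Real.mul_self_sqrt (by norm_num)
  have hs1 : 1 ≤ Real.sqrt 2 := by nlinarith
  refine ⟨bohrA, bohrS, bohrB, ?_, ?_, ?_, ?_, ?_, ?_, ?_, ?_, ?_⟩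
  · intro i j h
    fin_cases i <;> fin_cases j <;>
      simp_all [bohrA, Matrix.vecHead, Matrix.vecTail, Fin.lt_def]
  · rw [bohr_trace_A]
    norm_num [Complex.le_def]
  · show bohrSᴴ = bohrS
    ext i j
    fin_cases i <;> fin_cases j <;>
      simp [bohrS, Matrix.conjTranspose_apply, Matrix.vecHead, Matrix.vecTail]
  · intro i j h
    fin_cases i <;> fin_cases j <;>
      simp_all [bohrS, Matrix.vecHead, Matrix.vecTail]
  · intro i
    fin_cases i <;> simp [bohrS, Matrix.vecHead, Matrix.vecTail]
  · have h2 : (Real.sqrt 2 : ℂ)^2 = 2 := by rw [sq, bohr_s_sq]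
    have hM : bohrS - (2 : ℂ)⁻¹ • (bohrA + bohrAᴴ) = bohrCᴴ * bohrC := by
      ext i j
      fin_cases i <;> fin_cases j <;>
        simp [bohrA, bohrS, bohrC, Matrix.mul_apply, Fin.sum_univ_three,
          Matrix.conjTranspose_apply, Matrix.vecHead, Matrix.vecTail] <;>
        ring_nf <;> simp [h2]
    rw [hM]
    exact Matrix.posSemidef_conjTranspose_mul_self bohrC
  · intro i j h
    fin_cases i <;> fin_cases j <;>
      simp_all [bohrB, Matrix.vecHead, Matrix.vecTail, Fin.le_def]
  · rw [Matrix.l2_opNorm_def]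
    refine ContinuousLinearMap.opNorm_le_bound _ zero_le_one fun x => ?_
    rw [one_mul]
    have h1 : ((Matrix.toEuclideanLin.trans LinearMap.toContinuousLinearMap) bohrB) x
        = (WithLp.equiv 2 (Fin 3 → ℂ)).symm
            (bohrB *ᵥ (WithLp.equiv 2 (Fin 3 → ℂ)) x) := rfl
    rw [h1, EuclideanSpace.norm_eq, EuclideanSpace.norm_eq]
    apply Real.sqrt_le_sqrt
    simp [Fin.sum_univ_three, Matrix.mulVec, dotProduct, bohrB,
      Matrix.vecHead, Matrix.vecTail]
  · intro r hr hr1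
    have hrpos : 0 < r := lt_of_le_of_lt (by linarith) hr
    have h1r : 0 < 1 - r := by linarith
    have habs : ‖(bohrA * bohrBᴴ).trace‖ = 4 * Real.sqrt 2 := by
      rw [bohr_trace_AB, norm_neg]
      rw [show (4 * (Real.sqrt 2 : ℂ)) = ((4 * Real.sqrt 2 : ℝ) : ℂ) by push_cast; ring]
      rw [Complex.norm_real, Real.norm_of_nonneg (by positivity)]
    have hsum : ∑' m : ℕ, ‖(bohrA * bohrBᴴ).trace‖ * r ^ (m + 1)
        = (4 * Real.sqrt 2 * r) * (1 - r)⁻¹ := by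
      have he : ∀ m : ℕ, ‖(bohrA * bohrBᴴ).trace‖ * r ^ (m + 1)
          = (4 * Real.sqrt 2 * r) * r ^ m := by
        intro m; rw [habs]; ring
      simp_rw [he]
      rw [tsum_mul_left, tsum_geometric_of_lt_one hrpos.le hr1]
    rw [hsum, bohr_trace_A, bohr_trace_S]
    have key : 1 - r < Real.sqrt 2 * r := by nlinarith
    have hfin : (4:ℝ) < 4 * Real.sqrt 2 * r * (1 - r)⁻¹ := by
      rw [← div_eq_mul_inv, lt_div_iff₀ h1r]
      nlinarith
    norm_num
    linarith
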